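/- There is a constant C > 0 such that for all n ∈ ℕ and l_b > 0, the L¹ norm of the vortex coherent state ψ_{z,n} satisfies ‖ψ_{z,n}‖_{L¹} = 2^{(n+3)/2} √π · l_b · Γ(n/2 + 1)/√(n!) ≤ C·(n+1)^{1/4}·l_b. -/

import Mathlib

open MeasureTheory Real Complex

/-- The vortex coherent state centered at `z ∈ ℂ` in the `n`-th Landau level, with magnetic
length `l_b`:
`ψ_{z,n}(x) = (i^n/(√(2π n!) l_b)) ((x̄ - z̄)/(√2 l_b))^n exp(-(|x-z|² - 2i z^⊥·x)/(4 l_b²))`,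
where `z^⊥·x = Re(conj(i z) x)`. -/
noncomputable def vortexCoherentState (n : ℕ) (l_b : ℝ) (z : ℂ) (x : ℂ) : ℂ :=
  (Complex.I ^ n / ((Real.sqrt (2 * π * n.factorial) * l_b : ℝ) : ℂ)) *
    ((starRingEnd ℂ) (x - z) / ((Real.sqrt 2 * l_b : ℝ) : ℂ)) ^ n *
    Complex.exp (-(((‖x - z‖ : ℝ) : ℂ) ^ 2
        - 2 * Complex.I * ((((starRingEnd ℂ) (Complex.I * z) * x).re : ℝ) : ℂ))
      / (4 * (l_b : ℂ) ^ 2))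

lemma abs_vcs (n : ℕ) (l : ℝ) (hl : 0 < l) (z x : ℂ) :
    ‖vortexCoherentState n l z (x + z)‖ =
      ((Real.sqrt (2 * π * n.factorial) * l)⁻¹ * (Real.sqrt 2 * l)⁻¹ ^ n) *
        (‖x‖ ^ (n : ℝ) * Real.exp (-(1/(4*l^2)) * ‖x‖ ^ (2 : ℝ))) := by
  have h1 : (4 : ℂ) * (l : ℂ) ^ 2 = ((4 * l ^ 2 : ℝ) : ℂ) := by push_cast; ring
  have hre : (-(((‖x + z - z‖ : ℝ) : ℂ) ^ 2
        - 2 * Complex.I * ((((starRingEnd ℂ) (Complex.I * z) * (x + z)).re : ℝ) : ℂ))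
      / (4 * (l : ℂ) ^ 2)).re = -(1/(4*l^2)) * ‖x‖ ^ (2:ℝ) := by
    rw [h1, Complex.div_ofReal_re]
    simp [Real.rpow_natCast, ← Complex.ofReal_pow]
    ring
  unfold vortexCoherentState
  rw [norm_mul, norm_mul, Complex.norm_exp, hre, norm_pow, norm_div, norm_div]
  simp only [norm_pow, Complex.norm_I, one_pow, Complex.norm_real, Real.norm_eq_abs, Complex.norm_conj,
    add_sub_cancel_right]
  rw [abs_of_pos (by positivity : (0:ℝ) < Real.sqrt (2 * π * n.factorial) * l),
    abs_of_pos (by positivity : (0:ℝ) < Real.sqrt 2 * l)]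
  rw [Real.rpow_natCast]
  field_simp
  ring

lemma algB (n : ℕ) (l : ℝ) (hl : 0 < l) :
    (Real.sqrt (2 * π * n.factorial) * l)⁻¹ * (Real.sqrt 2 * l)⁻¹ ^ n *
      ((2 * π / 2) * ((1/(4*l^2) : ℝ) ^ (-(((n:ℝ)) + 2) / 2)) * Real.Gamma (((n:ℝ) + 2) / 2))
    = (2:ℝ) ^ (((n:ℝ)+3)/2) * Real.sqrt π * l * Real.Gamma ((n:ℝ)/2+1) / Real.sqrt n.factorial := by
  have hf : (0:ℝ) ≤ (n.factorial:ℝ) := by positivity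
  have harg : ((n:ℝ)+2)/2 = (n:ℝ)/2 + 1 := by ring
  have hA : Real.sqrt (2 * π * n.factorial) = Real.sqrt 2 * Real.sqrt π * Real.sqrt n.factorial := by
    rw [Real.sqrt_mul (by positivity), Real.sqrt_mul (by norm_num)]
  have hB : (Real.sqrt 2 * l)⁻¹ ^ n = ((Real.sqrt 2)^n * l^n)⁻¹ := by
    rw [inv_pow, mul_pow]
  have hC : ((1/(4*l^2) : ℝ) ^ (-(((n:ℝ)) + 2) / 2))
      = (Real.sqrt 2 * Real.sqrt 2)^(n+2) * l^(n+2) := by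
    have e1 : (1/(4*l^2):ℝ) = (2*l) ^ ((-2):ℝ) := by
      rw [show ((-2):ℝ) = -((2:ℕ):ℝ) by norm_num, Real.rpow_neg (by positivity),
        Real.rpow_natCast]
      field_simp; ring
    rw [e1, ← Real.rpow_mul (by positivity : (0:ℝ) ≤ 2*l),
      show ((-2):ℝ) * (-(((n:ℝ)) + 2) / 2) = ((n+2 : ℕ):ℝ) by push_cast; ring,
      Real.rpow_natCast, mul_pow, Real.mul_self_sqrt (by norm_num)]
  have hD : (2:ℝ) ^ (((n:ℝ)+3)/2) = (Real.sqrt 2)^(n+3) := by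
    rw [show ((n:ℝ)+3)/2 = (1/2) * ((n+3:ℕ):ℝ) by push_cast; ring,
      Real.rpow_mul (by norm_num), ← Real.sqrt_eq_rpow, Real.rpow_natCast]
  have hπ : (2:ℝ) * π / 2 = Real.sqrt π * Real.sqrt π := by
    rw [Real.mul_self_sqrt Real.pi_pos.le]; ring
  rw [hA, hB, hC, hD, hπ, harg]
  have h1 : Real.sqrt 2 ≠ 0 := by positivity
  have h2 : Real.sqrt π ≠ 0 := by positivity
  have h3 : Real.sqrt (n.factorial:ℝ) ≠ 0 := by positivity
  field_simp
  ring

lemma integral_vcs (n : ℕ) (l : ℝ) (hl : 0 < l) (z : ℂ) :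
    (∫ x : ℂ, ‖vortexCoherentState n l z x‖)
      = (2:ℝ) ^ (((n:ℝ)+3)/2) * Real.sqrt π * l * Real.Gamma ((n:ℝ)/2+1) / Real.sqrt n.factorial := by
  rw [← integral_add_right_eq_self (fun x : ℂ => ‖vortexCoherentState n l z x‖) z]
  simp_rw [abs_vcs n l hl z]
  rw [integral_const_mul,
    Complex.integral_rpow_mul_exp_neg_mul_rpow (by norm_num : (1:ℝ) ≤ 2)
      (by linarith [show (0:ℝ) ≤ n from Nat.cast_nonneg n] : (-2:ℝ) < n)
      (by positivity : (0:ℝ) < 1/(4*l^2))]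
  exact algB n l hl

lemma gammaHalf (x : ℝ) (hx : 0 < x) :
    Real.Gamma (x + 1/2) ≤ Real.Gamma x * Real.sqrt x := by
  have hΓx : 0 < Real.Gamma x := Real.Gamma_pos_of_pos hx
  have hΓ1 : 0 < Real.Gamma (x+1) := Real.Gamma_pos_of_pos (by linarith)
  have h := Real.convexOn_log_Gamma.2 (Set.mem_Ioi.mpr hx)
    (Set.mem_Ioi.mpr (by linarith : (0:ℝ) < x + 1))
    (by norm_num : (0:ℝ) ≤ 1/2) (by norm_num : (0:ℝ) ≤ 1/2) (by norm_num)
  simp only [smul_eq_mul, Function.comp_apply] at h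
  rw [show (1/2:ℝ)*x + (1/2)*(x+1) = x + 1/2 by ring] at h
  have h2 := Real.exp_le_exp.mpr h
  rw [Real.exp_log (Real.Gamma_pos_of_pos (by linarith : (0:ℝ) < x + 1/2)), Real.exp_add] at h2
  refine h2.trans_eq ?_
  rw [show (1/2:ℝ) * Real.log (Real.Gamma x) = Real.log (Real.Gamma x) * (1/2) by ring,
    show (1/2:ℝ) * Real.log (Real.Gamma (x+1)) = Real.log (Real.Gamma (x+1)) * (1/2) by ring,
    ← Real.rpow_def_of_pos hΓx, ← Real.rpow_def_of_pos hΓ1, Real.Gamma_add_one hx.ne',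
    Real.mul_rpow hx.le hΓx.le]
  rw [show Real.Gamma x ^ (1/2:ℝ) * (x ^ (1/2:ℝ) * Real.Gamma x ^ (1/2:ℝ))
      = (Real.Gamma x ^ (1/2:ℝ) * Real.Gamma x ^ (1/2:ℝ)) * x ^ (1/2:ℝ) by ring,
    ← Real.rpow_add hΓx, Real.sqrt_eq_rpow]
  norm_num

lemma algC (n : ℕ) :
    (2:ℝ) ^ (((n:ℝ)+3)/2) * Real.sqrt π * Real.Gamma ((n:ℝ)/2+1) / Real.sqrt n.factorial
      ≤ (8*π) * ((n:ℝ)+1) ^ ((1:ℝ)/4) := by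
  have hN : (0:ℝ) ≤ (n:ℝ) := Nat.cast_nonneg n
  have hΓ2 : 0 < Real.Gamma ((n:ℝ)/2+1) := Real.Gamma_pos_of_pos (by positivity)
  have hΓ1 : 0 < Real.Gamma (((n:ℝ)+1)/2) := Real.Gamma_pos_of_pos (by positivity)
  have hf : (0:ℝ) < (n.factorial:ℝ) := by positivity
  refine le_of_pow_le_pow_left₀ two_ne_zero (by positivity) ?_
  have hdup := Real.Gamma_mul_Gamma_add_half (((n:ℝ)+1)/2)
  rw [show ((n:ℝ)+1)/2 + 1/2 = (n:ℝ)/2+1 by ring, show 2*(((n:ℝ)+1)/2) = (n:ℝ)+1 by ring,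
    show (1:ℝ) - ((n:ℝ)+1) = -(n:ℝ) by ring] at hdup
  rw [Real.Gamma_nat_eq_factorial] at hdup
  have hinv : (2:ℝ)^((n:ℝ)) * (2:ℝ)^(-(n:ℝ)) = 1 := by
    rw [← Real.rpow_add (by norm_num)]; norm_num
  have e1 : ((2:ℝ)^(((n:ℝ)+3)/2))^2 = (2:ℝ)^((n:ℝ)) * 8 := by
    rw [← Real.rpow_natCast ((2:ℝ)^(((n:ℝ)+3)/2)) 2, ← Real.rpow_mul (by norm_num),
      show (((n:ℝ)+3)/2) * ((2:ℕ):ℝ) = (n:ℝ)+3 by push_cast; ring,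
      Real.rpow_add (by norm_num : (0:ℝ) < 2)]
    norm_num
  have e2 : (((n:ℝ)+1) ^ ((1:ℝ)/4))^2 = Real.sqrt ((n:ℝ)+1) := by
    rw [← Real.rpow_natCast (((n:ℝ)+1) ^ ((1:ℝ)/4)) 2, ← Real.rpow_mul (by positivity),
      show ((1:ℝ)/4) * ((2:ℕ):ℝ) = 1/2 by push_cast; ring, Real.sqrt_eq_rpow]
  have hE2 : ((2:ℝ) ^ (((n:ℝ)+3)/2) * Real.sqrt π * Real.Gamma ((n:ℝ)/2+1) / Real.sqrt n.factorial)^2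
      = 8*π*Real.sqrt π*Real.Gamma ((n:ℝ)/2+1)/Real.Gamma (((n:ℝ)+1)/2) := by
    rw [div_pow, mul_pow, mul_pow, e1, Real.sq_sqrt Real.pi_pos.le, Real.sq_sqrt hf.le,
      div_eq_div_iff hf.ne' hΓ1.ne']
    linear_combination (8*π*Real.Gamma ((n:ℝ)/2+1)*(2:ℝ)^((n:ℝ))) * hdup
      + (8*π*Real.sqrt π*Real.Gamma ((n:ℝ)/2+1)*(n.factorial:ℝ)) * hinv
  rw [hE2, mul_pow, e2]
  have hg : Real.Gamma ((n:ℝ)/2+1) ≤ Real.Gamma (((n:ℝ)+1)/2) * Real.sqrt (((n:ℝ)+1)/2) := by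
    have := gammaHalf (((n:ℝ)+1)/2) (by positivity)
    rwa [show ((n:ℝ)+1)/2 + 1/2 = (n:ℝ)/2+1 by ring] at this
  have hπ1 : (1:ℝ) ≤ Real.sqrt π := by
    rw [show (1:ℝ) = Real.sqrt 1 by simp]
    exact Real.sqrt_le_sqrt (by linarith [Real.pi_gt_three])
  calc 8*π*Real.sqrt π*Real.Gamma ((n:ℝ)/2+1)/Real.Gamma (((n:ℝ)+1)/2)
      ≤ 8*π*Real.sqrt π*(Real.Gamma (((n:ℝ)+1)/2) * Real.sqrt (((n:ℝ)+1)/2))/Real.Gamma (((n:ℝ)+1)/2) := by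
        gcongr
    _ = 8*π*Real.sqrt π* Real.sqrt (((n:ℝ)+1)/2) := by
        field_simp
    _ ≤ (8*π)^2 * Real.sqrt ((n:ℝ)+1) := by
        have h1 : Real.sqrt (((n:ℝ)+1)/2) ≤ Real.sqrt ((n:ℝ)+1) :=
          Real.sqrt_le_sqrt (by linarith)
        have h2 : 8*π*Real.sqrt π ≤ (8*π)^2 := by
          nlinarith [Real.pi_gt_three, Real.sq_sqrt Real.pi_pos.le, Real.sqrt_nonneg π]
        have h3 : (0:ℝ) ≤ 8*π*Real.sqrt π := by positivity
        calc 8*π*Real.sqrt π* Real.sqrt (((n:ℝ)+1)/2) ≤ 8*π*Real.sqrt π* Real.sqrt ((n:ℝ)+1) :=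
              mul_le_mul_of_nonneg_left h1 h3
          _ ≤ (8*π)^2 * Real.sqrt ((n:ℝ)+1) := mul_le_mul_of_nonneg_right h2 (Real.sqrt_nonneg _)

/-- There is `C > 0` such that for all `n ∈ ℕ` and `l_b > 0` (and any center `z`),
`‖ψ_{z,n}‖_{L¹} = 2^((n+3)/2) √π l_b Γ(n/2+1)/√(n!) ≤ C (n+1)^(1/4) l_b`. -/
theorem stmt_4 :
    ∃ C : ℝ, 0 < C ∧ ∀ (n : ℕ) (l_b : ℝ), 0 < l_b → ∀ z : ℂ,
      (∫ x : ℂ, ‖vortexCoherentState n l_b z x‖)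
          = (2 : ℝ) ^ (((n : ℝ) + 3) / 2) * Real.sqrt π * l_b *
              Real.Gamma ((n : ℝ) / 2 + 1) / Real.sqrt (n.factorial : ℝ) ∧
      (∫ x : ℂ, ‖vortexCoherentState n l_b z x‖)
          ≤ C * ((n : ℝ) + 1) ^ ((1 : ℝ) / 4) * l_b := by
  refine ⟨8*π, by positivity, fun n l hl z => ⟨integral_vcs n l hl z, ?_⟩⟩
  rw [integral_vcs n l hl z]
  calc (2:ℝ) ^ (((n:ℝ)+3)/2) * Real.sqrt π * l * Real.Gamma ((n:ℝ)/2+1) / Real.sqrt n.factorial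
      = ((2:ℝ) ^ (((n:ℝ)+3)/2) * Real.sqrt π * Real.Gamma ((n:ℝ)/2+1) / Real.sqrt n.factorial) * l := by
        ring
    _ ≤ ((8*π) * ((n:ℝ)+1) ^ ((1:ℝ)/4)) * l := mul_le_mul_of_nonneg_right (algC n) hl.le
    _ = 8*π * ((n:ℝ)+1) ^ ((1:ℝ)/4) * l := by ring
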